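/- Robustness of linear recovery: let f* (x) = A^{⊗t} vec(E[w^{⊗t}|x]) be the exact t-word posterior and suppose f satisfies E_x[KL(f*(x) || f(x))] ≤ ε. Then with θ = ((A†)^{⊗t})ᵀ β, one has E_x[(E[P(w)|x] - θᵀ f(x))^2] ≤ 2||β||_2^2 · κ(A†)^{2t} · ε, where E[P(w)|x] = βᵀ vec(E[w^{⊗t}|x]). -/

import Mathlib

open Finset

/-- `t`-fold Kronecker power of a matrix, `(A^{⊗t})_{u,z} = ∏ i, A_{u i, z i}`. -/
def kronPow {α β : Type*} (A : Matrix α β ℝ) (t : ℕ) :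
    Matrix (Fin t → α) (Fin t → β) ℝ :=
  fun u z => ∏ i, A (u i) (z i)

/-- Moore–Penrose left pseudo-inverse `A† = (AᵀA)⁻¹Aᵀ`. -/
noncomputable def leftPinv {α β : Type*} [Fintype α] [Fintype β] [DecidableEq β]
    (A : Matrix α β ℝ) : Matrix β α ℝ :=
  (A.transpose * A)⁻¹ * A.transpose

/-- ℓ¹ condition number: `κ(M) = sup_{v ≠ 0} ‖Mv‖₁ / ‖v‖₁`. -/
noncomputable def l1CondNum {α β : Type*} [Fintype α] [Fintype β]
    (M : Matrix α β ℝ) : ℝ :=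
  sSup {c : ℝ | ∃ v : β → ℝ, v ≠ 0 ∧
    c = (∑ i, |M.mulVec v i|) / (∑ j, |v j|)}

/-- KL divergence between finite distributions. -/
noncomputable def klDiv {α : Type*} [Fintype α] (p q : α → ℝ) : ℝ :=
  ∑ k, p k * Real.log (p k / q k)

/-! ### Pointwise Pinsker-type bound via calculus -/

/-- Auxiliary function for the pointwise Pinsker inequality. -/
noncomputable def pinskerG (x : ℝ) : ℝ :=
  x * Real.log x - x + 1 - 3 * (x - 1) ^ 2 / (2 * (x + 2))

/-- Derivative of `pinskerG`. -/
noncomputable def pinskerG' (x : ℝ) : ℝ :=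
  Real.log x - 3 * (x - 1) * (x + 5) / (2 * (x + 2) ^ 2)

lemma hasDerivAt_pinskerG {x : ℝ} (hx : 0 < x) :
    HasDerivAt pinskerG (pinskerG' x) x := by
  have hne : (2 : ℝ) * (x + 2) ≠ 0 := by positivity
  have h1 : HasDerivAt (fun y : ℝ => y * Real.log y) (Real.log x + 1) x :=
    Real.hasDerivAt_mul_log hx.ne'
  have h2 : HasDerivAt (fun y : ℝ => 3 * (y - 1) ^ 2) (3 * (2 * (x - 1))) x := by
    have : HasDerivAt (fun y : ℝ => (y - 1) ^ 2) (2 * (x - 1) ^ 1 * 1) x :=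
      ((hasDerivAt_id x).sub_const 1).pow 2
    simpa using this.const_mul 3
  have h3 : HasDerivAt (fun y : ℝ => 2 * (y + 2)) 2 x := by
    simpa using ((hasDerivAt_id x).add_const 2).const_mul 2
  have h4 := (h2.div h3 hne)
  have h5 := ((h1.sub (hasDerivAt_id x)).add_const 1).sub h4
  refine h5.congr_deriv ?_
  unfold pinskerG'
  field_simp
  ring

lemma hasDerivAt_pinskerG' {x : ℝ} (hx : 0 < x) :
    HasDerivAt pinskerG' (1 / x - 27 / (x + 2) ^ 3) x := by
  have hne : (2 : ℝ) * (x + 2) ^ 2 ≠ 0 := by positivity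
  have h1 : HasDerivAt Real.log x⁻¹ x := Real.hasDerivAt_log hx.ne'
  have h2 : HasDerivAt (fun y : ℝ => 3 * (y - 1) * (y + 5)) (3 * (x - 1) + 3 * (x + 5)) x := by
    have ha : HasDerivAt (fun y : ℝ => 3 * (y - 1)) 3 x := by
      simpa using ((hasDerivAt_id x).sub_const 1).const_mul 3
    have hb : HasDerivAt (fun y : ℝ => y + 5) 1 x := (hasDerivAt_id x).add_const 5
    have := ha.mul hb
    refine this.congr_deriv ?_; ring
  have h3 : HasDerivAt (fun y : ℝ => 2 * (y + 2) ^ 2) (2 * (2 * (x + 2))) x := by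
    have : HasDerivAt (fun y : ℝ => (y + 2) ^ 2) (2 * (x + 2) ^ 1 * 1) x :=
      ((hasDerivAt_id x).add_const 2).pow 2
    simpa [mul_comm, mul_assoc, mul_left_comm] using this.const_mul 2
  have h4 := h2.div h3 hne
  have h5 := h1.sub h4
  refine h5.congr_deriv ?_
  have hxne : x ≠ 0 := hx.ne'
  have hx2 : x + 2 ≠ 0 := by positivity
  field_simp
  ring

lemma pinskerG'_one : pinskerG' 1 = 0 := by
  simp [pinskerG', Real.log_one]

lemma pinskerG_one : pinskerG 1 = 0 := by
  simp [pinskerG, Real.log_one]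

lemma pinskerG'_monotone : MonotoneOn pinskerG' (Set.Ioi (0 : ℝ)) := by
  have hderiv : ∀ x ∈ Set.Ioi (0 : ℝ), HasDerivAt pinskerG' (1 / x - 27 / (x + 2) ^ 3) x :=
    fun x hx => hasDerivAt_pinskerG' hx
  refine monotoneOn_of_deriv_nonneg (convex_Ioi 0) ?_ ?_ ?_
  · exact fun x hx => ((hderiv x hx).continuousAt).continuousWithinAt
  · rw [interior_Ioi]
    exact fun x hx => ((hderiv x hx).differentiableAt).differentiableWithinAt
  · rw [interior_Ioi]
    intro x hx
    rw [(hderiv x hx).deriv]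
    have hx0 : (0 : ℝ) < x := hx
    rw [sub_nonneg, div_le_div_iff₀ (by positivity) hx0]
    nlinarith [mul_nonneg (sq_nonneg (x - 1)) (by linarith : (0:ℝ) ≤ x + 8)]

lemma pinskerG'_nonneg {x : ℝ} (hx : 1 ≤ x) : 0 ≤ pinskerG' x := by
  have := pinskerG'_monotone (Set.mem_Ioi.mpr one_pos)
    (Set.mem_Ioi.mpr (lt_of_lt_of_le one_pos hx)) hx
  rwa [pinskerG'_one] at this

lemma pinskerG'_nonpos {x : ℝ} (hx0 : 0 < x) (hx : x ≤ 1) : pinskerG' x ≤ 0 := by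
  have := pinskerG'_monotone (Set.mem_Ioi.mpr hx0) (Set.mem_Ioi.mpr one_pos) hx
  rwa [pinskerG'_one] at this

lemma pinskerG_nonneg {x : ℝ} (hx : 0 ≤ x) : 0 ≤ pinskerG x := by
  have hcont : ContinuousOn pinskerG (Set.Ici (0 : ℝ)) := by
    apply ContinuousOn.sub
    · exact ((Real.continuous_mul_log.sub continuous_id).add continuous_const).continuousOn
    · apply ContinuousOn.div
      · fun_prop
      · fun_prop
      · intro y hy
        have : (0:ℝ) ≤ y := hy
        positivity
  rcases le_or_gt 1 x with h1 | h1
  · have hmono : MonotoneOn pinskerG (Set.Ici (1 : ℝ)) := by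
      refine monotoneOn_of_deriv_nonneg (convex_Ici 1)
        (hcont.mono (by intro y hy; exact le_trans zero_le_one (Set.mem_Ici.mp hy))) ?_ ?_
      · rw [interior_Ici]
        intro y hy
        exact (hasDerivAt_pinskerG (lt_trans one_pos hy)).differentiableAt.differentiableWithinAt
      · rw [interior_Ici]
        intro y hy
        rw [(hasDerivAt_pinskerG (lt_trans one_pos hy)).deriv]
        exact pinskerG'_nonneg (le_of_lt hy)
    have := hmono (Set.mem_Ici.mpr le_rfl) (Set.mem_Ici.mpr h1) h1
    rwa [pinskerG_one] at this
  · have hanti : AntitoneOn pinskerG (Set.Icc (0 : ℝ) 1) := by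
      refine antitoneOn_of_deriv_nonpos (convex_Icc 0 1)
        (hcont.mono Set.Icc_subset_Ici_self) ?_ ?_
      · rw [interior_Icc]
        intro y hy
        exact (hasDerivAt_pinskerG hy.1).differentiableAt.differentiableWithinAt
      · rw [interior_Icc]
        intro y hy
        rw [(hasDerivAt_pinskerG hy.1).deriv]
        exact pinskerG'_nonpos hy.1 hy.2.le
    have := hanti (Set.mem_Icc.mpr ⟨hx, h1.le⟩) (Set.mem_Icc.mpr ⟨zero_le_one, le_rfl⟩) h1.le
    rwa [pinskerG_one] at this

/-! ### Pinsker's inequality for finite distributions -/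

lemma pinsker_pointwise {p q : ℝ} (hp : 0 ≤ p) (hq : 0 < q) :
    3 * (p - q) ^ 2 / (2 * (p + 2 * q)) ≤ p * Real.log (p / q) - p + q := by
  have h := pinskerG_nonneg (div_nonneg hp hq.le)
  unfold pinskerG at h
  have hkey : q * (p / q * Real.log (p / q) - p / q + 1
      - 3 * (p / q - 1) ^ 2 / (2 * (p / q + 2)))
      = (p * Real.log (p / q) - p + q) - 3 * (p - q) ^ 2 / (2 * (p + 2 * q)) := by
    have h2 : p + 2 * q ≠ 0 := by positivity
    field_simp
  nlinarith [mul_nonneg hq.le h]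

lemma pinsker_finite {α : Type*} [Fintype α] (p q : α → ℝ)
    (hp : ∀ k, 0 ≤ p k) (hq : ∀ k, 0 < q k)
    (hps : ∑ k, p k = 1) (hqs : ∑ k, q k = 1) :
    (∑ k, |p k - q k|) ^ 2 ≤ 2 * klDiv p q := by
  set w : α → ℝ := fun k => 2 * (p k + 2 * q k) / 3 with hw
  have hwpos : ∀ k, 0 < w k := fun k => by
    have := hp k; have := hq k; simp only [hw]; positivity
  have hws : ∑ k, w k = 2 := by
    have : ∀ k : α, w k = (2/3) * p k + (4/3) * q k := fun k => by simp only [hw]; ring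
    simp_rw [this]
    rw [Finset.sum_add_distrib, ← Finset.mul_sum, ← Finset.mul_sum, hps, hqs]
    norm_num
  have hcs := Finset.sum_mul_sq_le_sq_mul_sq Finset.univ
    (fun k => |p k - q k| / Real.sqrt (w k)) (fun k => Real.sqrt (w k))
  have hsimp1 : ∀ k : α, |p k - q k| / Real.sqrt (w k) * Real.sqrt (w k) = |p k - q k| :=
    fun k => div_mul_cancel₀ _ (Real.sqrt_ne_zero'.mpr (hwpos k))
  have hsimp2 : ∀ k : α, (|p k - q k| / Real.sqrt (w k)) ^ 2 = (p k - q k) ^ 2 / w k :=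
    fun k => by rw [div_pow, sq_abs, Real.sq_sqrt (hwpos k).le]
  have hsimp3 : ∀ k : α, (Real.sqrt (w k)) ^ 2 = w k := fun k => Real.sq_sqrt (hwpos k).le
  simp_rw [hsimp1, hsimp2, hsimp3, hws] at hcs
  have hterm : ∑ k, (p k - q k) ^ 2 / w k ≤ klDiv p q := by
    have hkl : klDiv p q = ∑ k, (p k * Real.log (p k / q k) - p k + q k) := by
      unfold klDiv
      rw [Finset.sum_add_distrib, Finset.sum_sub_distrib, hps, hqs]
      ring
    rw [hkl]
    apply Finset.sum_le_sum
    intro k _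
    have heq : (p k - q k) ^ 2 / w k = 3 * (p k - q k) ^ 2 / (2 * (p k + 2 * q k)) := by
      have h2 : p k + 2 * q k ≠ 0 := by have := hp k; have := hq k; positivity
      simp only [hw]
      field_simp
    rw [heq]
    exact pinsker_pointwise (hp k) (hq k)
  calc (∑ k, |p k - q k|) ^ 2 ≤ (∑ k, (p k - q k) ^ 2 / w k) * 2 := hcs
    _ ≤ klDiv p q * 2 := mul_le_mul_of_nonneg_right hterm (by norm_num)
    _ = 2 * klDiv p q := by ring

/-! ### Kronecker power and condition number lemmas -/

section Matrices
set_option linter.unusedSectionVars false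
variable {α β γ : Type*} [Fintype α] [Fintype β] [Fintype γ]

lemma kronPow_one (t : ℕ) [DecidableEq α] : kronPow (1 : Matrix α α ℝ) t = 1 := by
  ext u z
  simp only [kronPow, Matrix.one_apply]
  by_cases h : u = z
  · subst h; simp
  · rw [if_neg h]
    obtain ⟨i, hi⟩ := Function.ne_iff.mp h
    exact Finset.prod_eq_zero (Finset.mem_univ i) (by simp [Matrix.one_apply, hi])

lemma kronPow_mul (M : Matrix α β ℝ) (N : Matrix β γ ℝ) (t : ℕ) :
    kronPow M t * kronPow N t = kronPow (M * N) t := by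
  classical
  ext u z
  simp only [Matrix.mul_apply, kronPow]
  rw [Finset.prod_univ_sum (fun _ => Finset.univ) (fun i b => M (u i) b * N b (z i)),
    Fintype.piFinset_univ]
  exact Finset.sum_congr rfl fun m _ => (Finset.prod_mul_distrib).symm

lemma abs_mulVec_le (M : Matrix α β ℝ) (v : β → ℝ) (i : α) :
    |M.mulVec v i| ≤ ∑ j, |M i j| * |v j| := by
  rw [Matrix.mulVec, dotProduct]
  exact (Finset.abs_sum_le_sum_abs _ _).trans (le_of_eq (by simp [abs_mul]))

lemma l1_mulVec_le (M : Matrix α β ℝ) {C : ℝ} (hC : ∀ j, ∑ i, |M i j| ≤ C) (v : β → ℝ) :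
    ∑ i, |M.mulVec v i| ≤ C * ∑ j, |v j| := by
  calc ∑ i, |M.mulVec v i| ≤ ∑ i, ∑ j, |M i j| * |v j| :=
        Finset.sum_le_sum fun i _ => abs_mulVec_le M v i
    _ = ∑ j, (∑ i, |M i j|) * |v j| := by
        rw [Finset.sum_comm]
        exact Finset.sum_congr rfl fun j _ => (Finset.sum_mul _ _ _).symm
    _ ≤ ∑ j, C * |v j| :=
        Finset.sum_le_sum fun j _ => mul_le_mul_of_nonneg_right (hC j) (abs_nonneg _)
    _ = C * ∑ j, |v j| := (Finset.mul_sum _ _ _).symm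

lemma l1CondNum_bddAbove (M : Matrix α β ℝ) :
    BddAbove {c : ℝ | ∃ v : β → ℝ, v ≠ 0 ∧
      c = (∑ i, |M.mulVec v i|) / (∑ j, |v j|)} := by
  refine ⟨∑ j, ∑ i, |M i j|, ?_⟩
  rintro c ⟨v, hv, rfl⟩
  have hvpos : 0 < ∑ j, |v j| := by
    obtain ⟨j, hj⟩ := Function.ne_iff.mp hv
    exact Finset.sum_pos' (fun j' _ => abs_nonneg _)
      ⟨j, Finset.mem_univ j, abs_pos.mpr hj⟩
  rw [div_le_iff₀ hvpos]
  refine le_trans (l1_mulVec_le M (fun j => ?_) v) le_rfl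
  exact Finset.single_le_sum (f := fun j => ∑ i, |M i j|)
    (fun j' _ => Finset.sum_nonneg fun i _ => abs_nonneg _) (Finset.mem_univ j)

lemma col_le_l1CondNum (M : Matrix α β ℝ) (j : β) :
    ∑ i, |M i j| ≤ l1CondNum M := by
  classical
  apply le_csSup (l1CondNum_bddAbove M)
  refine ⟨fun j' => if j' = j then 1 else 0, ?_, ?_⟩
  · intro h
    have := congrFun h j
    simp at this
  · have h1 : ∀ i, M.mulVec (fun j' => if j' = j then (1:ℝ) else 0) i = M i j := by
      intro i
      simp [Matrix.mulVec, dotProduct, mul_ite]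
    have h2 : (∑ j' : β, |if j' = j then (1:ℝ) else 0|) = 1 := by
      simp [apply_ite]
    simp_rw [h1, h2, div_one]

lemma l1CondNum_nonneg (M : Matrix α β ℝ) : 0 ≤ l1CondNum M := by
  by_cases hβ : ∃ v : β → ℝ, v ≠ 0
  · obtain ⟨v, hv⟩ := hβ
    refine le_trans ?_ (le_csSup (l1CondNum_bddAbove M) ⟨v, hv, rfl⟩)
    have hvpos : 0 < ∑ j, |v j| := by
      obtain ⟨j, hj⟩ := Function.ne_iff.mp hv
      exact Finset.sum_pos' (fun j' _ => abs_nonneg _)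
        ⟨j, Finset.mem_univ j, abs_pos.mpr hj⟩
    positivity
  · have : {c : ℝ | ∃ v : β → ℝ, v ≠ 0 ∧
        c = (∑ i, |M.mulVec v i|) / (∑ j, |v j|)} = ∅ := by
      ext c; simp only [Set.mem_setOf_eq, Set.mem_empty_iff_false, iff_false]
      rintro ⟨v, hv, -⟩
      exact hβ ⟨v, hv⟩
    rw [l1CondNum, this, Real.sSup_empty]

lemma l1_kron_mulVec_le (M : Matrix α β ℝ) (t : ℕ) (w : (Fin t → β) → ℝ) :
    ∑ z, |(kronPow M t).mulVec w z| ≤ l1CondNum M ^ t * ∑ u, |w u| := by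
  classical
  apply l1_mulVec_le
  intro u
  have hcol : ∑ z : Fin t → α, |kronPow M t z u| = ∏ i, ∑ a, |M a (u i)| := by
    simp only [kronPow, Finset.abs_prod]
    rw [Finset.prod_univ_sum (fun _ => Finset.univ) (fun i a => |M a (u i)|),
      Fintype.piFinset_univ]
  rw [hcol]
  calc ∏ i, ∑ a, |M a (u i)| ≤ ∏ _i : Fin t, l1CondNum M :=
        Finset.prod_le_prod (fun i _ => Finset.sum_nonneg fun a _ => abs_nonneg _)
          (fun i _ => col_le_l1CondNum M (u i))
    _ = l1CondNum M ^ t := by simp [Finset.prod_const]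

end Matrices

lemma leftPinv_mul {V K : ℕ} (A : Matrix (Fin V) (Fin K) ℝ) (hrank : A.rank = K) :
    leftPinv A * A = 1 := by
  have h1 : (A.transpose * A).rank = K := by rw [Matrix.rank_transpose_mul_self, hrank]
  have h2 : IsUnit (A.transpose * A) := by
    rw [← Matrix.mulVec_surjective_iff_isUnit]
    have hr : LinearMap.range (A.transpose * A).mulVecLin = ⊤ := by
      apply Submodule.eq_top_of_finrank_eq
      rw [Module.finrank_fintype_fun_eq_card, Fintype.card_fin]
      exact h1
    intro y
    obtain ⟨x, hx⟩ := LinearMap.range_eq_top.mp hr y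
    exact ⟨x, hx⟩
  have h3 : IsUnit (A.transpose * A).det := (Matrix.isUnit_iff_isUnit_det _).mp h2
  rw [leftPinv, Matrix.mul_assoc, Matrix.nonsing_inv_mul _ h3]

lemma sum_sq_le_sq_sum {ι : Type*} [Fintype ι] (a : ι → ℝ) (h : ∀ i, 0 ≤ a i) :
    ∑ i, a i ^ 2 ≤ (∑ i, a i) ^ 2 := by
  calc ∑ i, a i ^ 2 ≤ ∑ i, a i * ∑ j, a j :=
        Finset.sum_le_sum fun i _ => by
          rw [sq]
          exact mul_le_mul_of_nonneg_left
            (Finset.single_le_sum (fun j _ => h j) (Finset.mem_univ i)) (h i)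
    _ = (∑ i, a i) ^ 2 := by rw [← Finset.sum_mul, sq]

/-- Robustness of linear recovery: if the exact `t`-word posterior is
`f*(x) = A^{⊗t} vec(E[w^{⊗t}|x])` and `E_x[KL(f*(x) ‖ f(x))] ≤ ε`, then with
`θ = ((A†)^{⊗t})ᵀ β` one has
`E_x[(E[P(w)|x] - θᵀ f(x))²] ≤ 2 ‖β‖₂² κ(A†)^{2t} ε`. -/
theorem robust_linear_recovery {V K t : ℕ} {X : Type*} [Fintype X]
    (A : Matrix (Fin V) (Fin K) ℝ) (hrank : A.rank = K)
    (μ : X → ℝ) (hμ_nonneg : ∀ x, 0 ≤ μ x) (hμ_sum : ∑ x, μ x = 1)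
    (wp : X → (Fin t → Fin K) → ℝ)
    (fstar f : X → (Fin t → Fin V) → ℝ)
    (hfstar : ∀ x, fstar x = (kronPow A t).mulVec (wp x))
    (hfstar_prob : ∀ x, (∀ u, 0 ≤ fstar x u) ∧ ∑ u, fstar x u = 1)
    (hf_prob : ∀ x, (∀ u, 0 < f x u) ∧ ∑ u, f x u = 1)
    (ε : ℝ) (hε : ∑ x, μ x * klDiv (fstar x) (f x) ≤ ε)
    (β : (Fin t → Fin K) → ℝ)
    (θ : (Fin t → Fin V) → ℝ)
    (hθ : θ = (kronPow (leftPinv A) t).transpose.mulVec β) :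
    ∑ x, μ x * (∑ z, β z * wp x z - ∑ u, θ u * f x u) ^ 2 ≤
      2 * (∑ z, β z ^ 2) * l1CondNum (leftPinv A) ^ (2 * t) * ε := by
  classical
  set κ := l1CondNum (leftPinv A) with hκ
  have hκ0 : 0 ≤ κ := l1CondNum_nonneg _
  set M := kronPow (leftPinv A) t with hM
  set B := ∑ z, β z ^ 2 with hB
  have hB0 : 0 ≤ B := Finset.sum_nonneg fun z _ => sq_nonneg _
  have hrecov : ∀ x, M.mulVec (fstar x) = wp x := by
    intro x
    rw [hfstar x, Matrix.mulVec_mulVec, hM, kronPow_mul, leftPinv_mul A hrank,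
      kronPow_one, Matrix.one_mulVec]
  have key : ∀ x, (∑ z, β z * wp x z - ∑ u, θ u * f x u) ^ 2 ≤
      2 * B * κ ^ (2 * t) * klDiv (fstar x) (f x) := by
    intro x
    have hθf : ∑ u, θ u * f x u = ∑ z, β z * M.mulVec (f x) z := by
      rw [hθ]
      simp only [Matrix.mulVec, dotProduct, Matrix.transpose_apply,
        Finset.sum_mul, Finset.mul_sum]
      rw [Finset.sum_comm]
      exact Finset.sum_congr rfl fun z _ => Finset.sum_congr rfl fun u _ => by ring
    set d : (Fin t → Fin V) → ℝ := fun u => fstar x u - f x u with hd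
    have hdiff : ∑ z, β z * wp x z - ∑ u, θ u * f x u = ∑ z, β z * M.mulVec d z := by
      rw [hθf, ← hrecov x]
      have hsub : M.mulVec d = M.mulVec (fstar x) - M.mulVec (f x) := by
        have : d = fstar x - f x := rfl
        rw [this, Matrix.mulVec_sub]
      rw [hsub]
      simp [Pi.sub_apply, mul_sub, Finset.sum_sub_distrib]
    rw [hdiff]
    have hcs : (∑ z, β z * M.mulVec d z) ^ 2 ≤ B * ∑ z, (M.mulVec d z) ^ 2 :=
      Finset.sum_mul_sq_le_sq_mul_sq Finset.univ β (fun z => M.mulVec d z)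
    have h2 : ∑ z, (M.mulVec d z) ^ 2 ≤ (∑ z, |M.mulVec d z|) ^ 2 := by
      have : ∀ z, (M.mulVec d z) ^ 2 = |M.mulVec d z| ^ 2 := fun z => (sq_abs _).symm
      simp_rw [this]
      exact sum_sq_le_sq_sum _ fun z => abs_nonneg _
    have h3 : ∑ z, |M.mulVec d z| ≤ κ ^ t * ∑ u, |d u| := l1_kron_mulVec_le _ t d
    have h4 : (∑ u, |d u|) ^ 2 ≤ 2 * klDiv (fstar x) (f x) :=
      pinsker_finite (fstar x) (f x) (hfstar_prob x).1 (hf_prob x).1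
        (hfstar_prob x).2 (hf_prob x).2
    have h5 : (∑ z, |M.mulVec d z|) ^ 2 ≤ (κ ^ t * ∑ u, |d u|) ^ 2 :=
      pow_le_pow_left₀ (Finset.sum_nonneg fun z _ => abs_nonneg _) h3 2
    have h6 : (κ ^ t * ∑ u, |d u|) ^ 2 = κ ^ (2 * t) * (∑ u, |d u|) ^ 2 := by
      rw [mul_pow, ← pow_mul, mul_comm t 2]
    calc (∑ z, β z * M.mulVec d z) ^ 2
        ≤ B * ∑ z, (M.mulVec d z) ^ 2 := hcs
      _ ≤ B * (∑ z, |M.mulVec d z|) ^ 2 := mul_le_mul_of_nonneg_left h2 hB0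
      _ ≤ B * (κ ^ (2 * t) * (∑ u, |d u|) ^ 2) := by
          rw [← h6]; exact mul_le_mul_of_nonneg_left h5 hB0
      _ ≤ B * (κ ^ (2 * t) * (2 * klDiv (fstar x) (f x))) := by
          refine mul_le_mul_of_nonneg_left (mul_le_mul_of_nonneg_left h4 ?_) hB0
          exact pow_nonneg hκ0 _
      _ = 2 * B * κ ^ (2 * t) * klDiv (fstar x) (f x) := by ring
  have hC0 : 0 ≤ 2 * B * κ ^ (2 * t) := by
    have := pow_nonneg hκ0 (2 * t)
    nlinarith
  calc ∑ x, μ x * (∑ z, β z * wp x z - ∑ u, θ u * f x u) ^ 2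
      ≤ ∑ x, μ x * (2 * B * κ ^ (2 * t) * klDiv (fstar x) (f x)) :=
        Finset.sum_le_sum fun x _ => mul_le_mul_of_nonneg_left (key x) (hμ_nonneg x)
    _ = 2 * B * κ ^ (2 * t) * ∑ x, μ x * klDiv (fstar x) (f x) := by
        rw [Finset.mul_sum Finset.univ (fun x => μ x * klDiv (fstar x) (f x))
          (2 * B * κ ^ (2 * t))]
        apply Finset.sum_congr rfl
        intro x _
        ring
    _ ≤ 2 * B * κ ^ (2 * t) * ε := mul_le_mul_of_nonneg_left hε hC0
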